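/- arXiv:2601.09236 — 2 statements merged into one kernel-verified Lean document; each statement's English description precedes it below -/
import Mathlib

section
/- For any integer n > 2, the quantity ε_n = (√(2n) − 2)/(n − 2) satisfies 0 < ε_n < 1/2 when n ≥ 9, and for every ε with 0 ≤ ε < ε_n we have 2(1−ε)²/n > ε². -/
/-- For `n > 2`, the quantity `ε_n = (√(2n) − 2)/(n − 2)` satisfies
`0 < ε_n < 1/2` when `n ≥ 9`, and for every `ε` with `0 ≤ ε < ε_n` we have
`2(1−ε)²/n > ε²`. -/
theorem stmt_4 (n : ℕ) (hn : 2 < n) :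
    (9 ≤ n → 0 < (Real.sqrt (2 * n) - 2) / ((n : ℝ) - 2) ∧
      (Real.sqrt (2 * n) - 2) / ((n : ℝ) - 2) < 1 / 2) ∧
    (∀ ε : ℝ, 0 ≤ ε → ε < (Real.sqrt (2 * n) - 2) / ((n : ℝ) - 2) →
      2 * (1 - ε)^2 / (n : ℝ) > ε^2) := by
  have hn' : (2 : ℝ) < n := by exact_mod_cast hn
  have hd : (0 : ℝ) < (n : ℝ) - 2 := by linarith
  have hnpos : (0 : ℝ) < n := by linarith
  set s := Real.sqrt (2 * n) with hs
  have hs0 : 0 ≤ s := Real.sqrt_nonneg _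
  have hs2 : s ^ 2 = 2 * n := Real.sq_sqrt (by positivity)
  have hs_gt2 : 2 < s := by
    nlinarith [hs2, hs0]
  constructor
  · intro _
    constructor
    · exact div_pos (by linarith) hd
    · rw [div_lt_div_iff₀ hd (by norm_num)]
      nlinarith [hs2, hs0, sq_nonneg ((n : ℝ) - 2)]
  · intro ε hε0 hε
    rw [gt_iff_lt, lt_div_iff₀ hnpos]
    rw [lt_div_iff₀ hd] at hε
    have ha : 2 + ((n : ℝ) - 2) * ε < s := by linarith
    have ha0 : 0 ≤ 2 + ((n : ℝ) - 2) * ε := by positivity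
    have hsq : (2 + ((n : ℝ) - 2) * ε) ^ 2 < 2 * (n : ℝ) := by
      nlinarith [ha, ha0, hs0, hs2]
    nlinarith [hsq, hd, mul_nonneg hε0 hε0]
end

section
/- Let n ≥ 2 and suppose R̂ : Fin n → ℝ satisfies (1/n)·Σ_i (R̂(i) − i)² ≤ ε² with ε < 1/2 − 1/√(2n) appropriately small so that n·ε² < 2(1−ε)². If R̂(i) = R_G(i) ± e_i with |e_i| ≤ ε where R_G are the exact ranks of an injective G : Fin n → ℝ, then R_G(i) = i for all i, i.e., G is strictly increasing. -/
open Classical in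
/-- Minimality direction of the relaxed theorem: if the soft ranks `R̂` have
per-element error at most `ε` from the exact ranks `R_G` of an injective `G`,
the rMSE loss is at most `ε²`, and `ε` is small enough that
`n·ε² < 2(1−ε)²` (e.g. `ε < 1/2 − 1/√(2n)`), then the exact ranks are the
identity and `G` is strictly increasing. -/
theorem stmt_17 (n : ℕ) (hn : 2 ≤ n) (ε : ℝ) (hε0 : 0 ≤ ε)
    (hεsmall : ε < 1 / 2 - 1 / Real.sqrt (2 * n))
    (hεkey : (n : ℝ) * ε^2 < 2 * (1 - ε)^2)
    (G : Fin n → ℝ) (hG : Function.Injective G)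
    (RG : Fin n → ℕ)
    (hRG : ∀ i, RG i = (Finset.univ.filter (fun j => G j < G i)).card)
    (Rhat : Fin n → ℝ) (hRhat : ∀ i, |Rhat i - (RG i : ℝ)| ≤ ε)
    (hloss : (1 / (n : ℝ)) * ∑ i : Fin n, (Rhat i - (i : ℕ))^2 ≤ ε^2) :
    (∀ i : Fin n, RG i = (i : ℕ)) ∧ StrictMono G := by
  have hn0 : (0:ℝ) < n := by
    have : (0:ℕ) < n := by omega
    exact_mod_cast this
  have hε12 : ε < 1/2 := by
    have hs : 0 < Real.sqrt (2 * n) := Real.sqrt_pos.mpr (by positivity)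
    have : 0 < 1 / Real.sqrt (2 * n) := by positivity
    linarith
  have hRGlt : ∀ i, RG i < n := by
    intro i
    rw [hRG]
    have hsub : (Finset.univ.filter (fun j => G j < G i)) ⊆ Finset.univ.erase i := by
      intro j hj
      simp only [Finset.mem_filter] at hj
      refine Finset.mem_erase.mpr ⟨?_, Finset.mem_univ _⟩
      rintro rfl; exact lt_irrefl _ hj.2
    calc (Finset.univ.filter (fun j => G j < G i)).card
        ≤ (Finset.univ.erase i).card := Finset.card_le_card hsub
      _ < Finset.univ.card := Finset.card_erase_lt_of_mem (Finset.mem_univ i)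
      _ = n := by simp
  have hmono : ∀ i j, G i < G j → RG i < RG j := by
    intro i j hij
    rw [hRG, hRG]
    apply Finset.card_lt_card
    have hsub : (Finset.univ.filter (fun k => G k < G i)) ⊆
        (Finset.univ.filter (fun k => G k < G j)) := by
      intro k hk
      simp only [Finset.mem_filter, Finset.mem_univ, true_and] at hk ⊢
      exact lt_trans hk hij
    rw [Finset.ssubset_iff_of_subset hsub]
    exact ⟨i, by simp [hij], by simp⟩
  set f : Fin n → Fin n := fun i => ⟨RG i, hRGlt i⟩ with hf
  have hfinj : Function.Injective f := by
    intro i j hij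
    by_contra hne
    have hGne : G i ≠ G j := fun h => hne (hG h)
    rcases lt_or_gt_of_ne hGne with h | h
    · have := hmono i j h
      have : RG i = RG j := congrArg Fin.val hij
      omega
    · have := hmono j i h
      have : RG i = RG j := congrArg Fin.val hij
      omega
  have hfbij : Function.Bijective f := Finite.injective_iff_bijective.mp hfinj
  set σ : Equiv.Perm (Fin n) := Equiv.ofBijective f hfbij with hσ
  have hσapp : ∀ k, σ k = f k := fun k => rfl
  have hbound : ∀ k : Fin n, RG k ≠ (k:ℕ) → (1-ε)^2 ≤ (Rhat k - (k:ℕ))^2 := by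
    intro k hk
    have hz : ((RG k : ℤ) - ((k:ℕ):ℤ)) ≠ 0 := by
      simp only [sub_ne_zero]
      exact_mod_cast hk
    have h1 : (1:ℤ) ≤ |(RG k:ℤ) - ((k:ℕ):ℤ)| := Int.one_le_abs hz
    have h1' : (1:ℝ) ≤ |(RG k:ℝ) - ((k:ℕ):ℝ)| := by
      exact_mod_cast h1
    have htri : |(RG k:ℝ) - ((k:ℕ):ℝ)| ≤ |Rhat k - (RG k:ℝ)| + |Rhat k - ((k:ℕ):ℝ)| := by
      have := abs_sub (Rhat k - ((k:ℕ):ℝ)) (Rhat k - (RG k:ℝ))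
      calc |(RG k:ℝ) - ((k:ℕ):ℝ)| = |(Rhat k - ((k:ℕ):ℝ)) - (Rhat k - (RG k:ℝ))| := by
            ring_nf
          _ ≤ |Rhat k - ((k:ℕ):ℝ)| + |Rhat k - (RG k:ℝ)| := abs_sub _ _
          _ = |Rhat k - (RG k:ℝ)| + |Rhat k - ((k:ℕ):ℝ)| := by ring
    have h2 : 1 - ε ≤ |Rhat k - ((k:ℕ):ℝ)| := by
      have := hRhat k
      linarith
    calc (1-ε)^2 ≤ |Rhat k - ((k:ℕ):ℝ)|^2 := by
          apply pow_le_pow_left₀ (by linarith) h2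
      _ = (Rhat k - ((k:ℕ):ℝ))^2 := sq_abs _
  have hkey : ∀ i : Fin n, RG i = (i:ℕ) := by
    by_contra h
    push_neg at h
    obtain ⟨i, hi⟩ := h
    have hσi : σ i ≠ i := by
      intro h
      exact hi (congrArg Fin.val h)
    set j := σ.symm i with hj
    have hji : j ≠ i := by
      intro h
      apply hσi
      have h2 : σ j = i := σ.apply_symm_apply i
      rw [h] at h2
      exact h2
    have hσj : RG j ≠ (j:ℕ) := by
      intro h
      apply hji
      have h2 : σ j = j := Fin.ext h
      have h3 : σ j = i := σ.apply_symm_apply i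
      rw [h2] at h3
      exact h3
    have hsum2 : 2*(1-ε)^2 ≤ ∑ k : Fin n, (Rhat k - (k:ℕ))^2 := by
      have hsubset : ({j, i} : Finset (Fin n)) ⊆ Finset.univ := Finset.subset_univ _
      have hle := Finset.sum_le_sum_of_subset_of_nonneg hsubset
        (fun k _ _ => sq_nonneg (Rhat k - (k:ℕ)))
      rw [Finset.sum_pair hji] at hle
      have hbj := hbound j hσj
      have hbi := hbound i hi
      linarith
    have hsum1 : ∑ k : Fin n, (Rhat k - (k:ℕ))^2 ≤ (n:ℝ) * ε^2 := by
      rw [div_mul_eq_mul_div, one_mul, div_le_iff₀ hn0] at hloss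
      linarith [hloss]
    linarith
  refine ⟨hkey, ?_⟩
  intro a b hab
  rcases lt_trichotomy (G a) (G b) with h | h | h
  · exact h
  · exact absurd (hG h) (ne_of_lt hab)
  · exfalso
    have := hmono b a h
    rw [hkey, hkey] at this
    exact absurd this (not_lt.mpr (le_of_lt hab))
end
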